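/- There is an absolute constant C₀ > 0 such that the following holds. Let n ≥ 1, χ ∈ (0,1), K ≥ 1, 0 < η ≤ 1/(100·K), γ > 0, t > 0, let r ≥ 0 be an integer, and let C ∈ ℝ^{n×n} have positive entries. Let (α,β), (α̃,β̃) ∈ ℤⁿ×ℤⁿ with (α',β') = (α+α̃, β+β̃); let D, P and D', P' be rounded duals of (α,β) and (α',β'), with weights w and w', and suppose D_{ij} ≤ (r+1)·K·C_{ij} and D'_{ij} ≤ (r+1)·K·C_{ij} for all i, j. Let λ be the probability distribution on [n]×[n]×{−1,1} proportional to w, and set ṽ = (1/t)·(Σᵢ α̃ᵢ − Σⱼ β̃ⱼ). Suppose: Σ_{i,j,σ} λ_{i,j,σ}·σ·(α̃ᵢ − β̃ⱼ)/C_{ij} ≤ ṽ − γ; |α̃ᵢ − β̃ⱼ| ≤ K·C_{ij} for all i,j; and |ṽ| ≤ K. Then, with W = Σ_{i,j,σ} w_{i,j,σ} and W' = Σ_{i,j,σ} w'_{i,j,σ}: W' ≤ W·exp(η·(2·χ·(r+1)·K + ṽ − γ + C₀·η·K²)). -/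

import Mathlib

open Finset

/-- `(D, P)` is a rounded-dual pair for `(α, β)` with rounding parameter `χ`. -/
def IsRoundedDual {n : ℕ} (χ : ℝ) (α β : Fin n → ℤ)
    (D P : Fin n → Fin n → ℝ) : Prop :=
  (∀ i j, D i j = 0 ∨ ∃ h : ℕ, D i j = (1 + χ) ^ h) ∧
  (∀ i j, D i j ≤ |(α i : ℝ) - (β j : ℝ)| ∧ |(α i : ℝ) - (β j : ℝ)| ≤ (1 + χ) * D i j) ∧
  (∀ i j, P i j = if 0 ≤ α i - β j then (1 : ℝ) else -1)

/-- The MWU weight `w_{i,j,σ} = exp(η·σ·P_{ij}·D_{ij}/C_{ij})`. -/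
noncomputable def wt {n : ℕ} (η : ℝ) (C D P : Fin n → Fin n → ℝ)
    (i j : Fin n) (σ : ℝ) : ℝ :=
  Real.exp (η * (σ * P i j) * D i j / C i j)

/-- Total weight `W = ∑_{i,j,σ∈{−1,1}} w_{i,j,σ}`. -/
noncomputable def totW {n : ℕ} (η : ℝ) (C D P : Fin n → Fin n → ℝ) : ℝ :=
  ∑ i, ∑ j, (wt η C D P i j 1 + wt η C D P i j (-1))

/-- The probability distribution `λ` proportional to the weights `w`. -/
noncomputable def lamOf {n : ℕ} (η : ℝ) (C D P : Fin n → Fin n → ℝ)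
    (i j : Fin n) (σ : ℝ) : ℝ :=
  wt η C D P i j σ / totW η C D P

lemma exp_quadratic {y : ℝ} (hy : |y| ≤ 1) : Real.exp y ≤ 1 + y + 2 * y ^ 2 := by
  have h := Real.exp_bound hy (by norm_num : 0 < 2)
  simp [Finset.sum_range_succ, Nat.factorial] at h
  have h2 := (abs_le.mp h).2
  nlinarith [sq_abs y, abs_nonneg y]

lemma dual_close {n : ℕ} {χ : ℝ} (hχ : 0 < χ) {α β : Fin n → ℤ}
    {D P : Fin n → Fin n → ℝ} (h : IsRoundedDual χ α β D P) (i j : Fin n) :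
    |P i j * D i j - ((α i : ℝ) - (β j : ℝ))| ≤ χ * D i j ∧ 0 ≤ D i j := by
  obtain ⟨-, h2, h3⟩ := h
  obtain ⟨hl, hu⟩ := h2 i j
  have hD0 : 0 ≤ D i j := by nlinarith [abs_nonneg ((α i : ℝ) - β j)]
  have hP : P i j * ((α i : ℝ) - β j) = |(α i : ℝ) - β j| := by
    rw [h3 i j]
    split_ifs with hs
    · rw [one_mul, abs_of_nonneg]
      exact_mod_cast sub_nonneg.mpr (by exact_mod_cast le_of_sub_nonneg hs)
    · rw [abs_of_neg]; ring
      push_neg at hs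
      have : (α i : ℝ) - β j < 0 := by exact_mod_cast hs
      linarith
  have hP2 : P i j * P i j = 1 := by rw [h3 i j]; split_ifs <;> norm_num
  have hP' : P i j * |(α i : ℝ) - β j| = (α i : ℝ) - β j := by
    rw [← hP, ← mul_assoc, hP2, one_mul]
  have key : P i j * D i j - ((α i : ℝ) - β j) = P i j * (D i j - |(α i : ℝ) - β j|) := by
    rw [mul_sub, hP']
  have hPabs : |P i j| = 1 := by rw [h3 i j]; split_ifs <;> simp
  rw [key, abs_mul, hPabs, one_mul]
  refine ⟨abs_le.mpr ⟨by nlinarith, by nlinarith⟩, hD0⟩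

set_option maxHeartbeats 1600000 in
/-- one step of MWU decreases the total weight:
`W' ≤ W·exp(η·(2χ(r+1)K + ṽ − γ + C₀·η·K²))`. -/
theorem total_weight_decrease :
    ∃ C₀ : ℝ, 0 < C₀ ∧
    ∀ (n : ℕ), 1 ≤ n →
    ∀ (χ K η γ t : ℝ), χ ∈ Set.Ioo (0 : ℝ) 1 → 1 ≤ K → 0 < η → η ≤ 1 / (100 * K) →
      0 < γ → 0 < t →
    ∀ (r : ℕ) (C : Fin n → Fin n → ℝ), (∀ i j, 0 < C i j) →
    ∀ (α β αt βt : Fin n → ℤ) (D P D' P' : Fin n → Fin n → ℝ),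
      IsRoundedDual χ α β D P →
      IsRoundedDual χ (α + αt) (β + βt) D' P' →
      (∀ i j, D i j ≤ ((r : ℝ) + 1) * K * C i j) →
      (∀ i j, D' i j ≤ ((r : ℝ) + 1) * K * C i j) →
    ∀ vt : ℝ, vt = (1 / t) * ((∑ i, (αt i : ℝ)) - ∑ j, (βt j : ℝ)) →
      (∑ i, ∑ j,
        (lamOf η C D P i j 1 * (1 * (((αt i : ℝ) - (βt j : ℝ)) / C i j)) +
         lamOf η C D P i j (-1) * ((-1) * (((αt i : ℝ) - (βt j : ℝ)) / C i j)))) ≤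
        vt - γ →
      (∀ i j, |(αt i : ℝ) - (βt j : ℝ)| ≤ K * C i j) →
      |vt| ≤ K →
      totW η C D' P' ≤
        totW η C D P *
          Real.exp (η * (2 * χ * ((r : ℝ) + 1) * K + vt - γ + C₀ * η * K ^ 2)) := by
  refine ⟨2, by norm_num, ?_⟩
  intro n hn χ K η γ t hχ hK hη hη' hγ ht r C hC α β αt βt D P D' P' hDP hDP' hDbd hD'bd
    vt hvt hlam hab hvtK
  obtain ⟨hχ0, hχ1⟩ := hχ
  have hK0 : (0 : ℝ) < K := by linarith
  have hηK : η * K ≤ 1 / 100 := by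
    rw [le_div_iff₀ (by positivity)] at hη'
    nlinarith
  have hWpos : 0 < totW η C D P := by
    rw [totW]
    have : Nonempty (Fin n) := ⟨⟨0, by omega⟩⟩
    refine Finset.sum_pos (fun i _ => Finset.sum_pos (fun j _ => ?_) univ_nonempty) univ_nonempty
    have h1 := Real.exp_pos (η * (1 * P i j) * D i j / C i j)
    have h2 := Real.exp_pos (η * (-1 * P i j) * D i j / C i j)
    unfold wt; linarith
  set W := totW η C D P with hW_def
  set x : Fin n → Fin n → ℝ := fun i j => ((αt i : ℝ) - (βt j : ℝ)) / C i j with hx_def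
  have hxK : ∀ i j, |x i j| ≤ K := fun i j => by
    rw [hx_def]; simp only
    rw [abs_div, abs_of_pos (hC i j), div_le_iff₀ (hC i j)]
    exact hab i j
  set T : ℝ := η * (2 * χ * ((r : ℝ) + 1) * K) with hT_def
  set q : ℝ := 2 * η ^ 2 * K ^ 2 with hq_def
  have hq0 : 0 ≤ q := by positivity
  -- pointwise step
  have hstep : ∀ (i j : Fin n) (σ : ℝ), σ = 1 ∨ σ = -1 →
      wt η C D' P' i j σ ≤ wt η C D P i j σ * ((1 + η * σ * x i j + q) * Real.exp T) := by
    intro i j σ hσ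
    have hσabs : |σ| = 1 := by rcases hσ with h | h <;> simp [h]
    obtain ⟨hcl, hD0⟩ := dual_close hχ0 hDP i j
    obtain ⟨hcl', hD'0⟩ := dual_close hχ0 hDP' i j
    have hCij := hC i j
    have hsum : ((((α + αt) i : ℤ) : ℝ) - (((β + βt) j : ℤ) : ℝ))
        = ((α i : ℝ) - β j) + ((αt i : ℝ) - βt j) := by
      simp only [Pi.add_apply]; push_cast; ring
    rw [hsum] at hcl'
    have hRK : χ * D i j ≤ χ * (((r : ℝ) + 1) * K * C i j) := by
      have := hDbd i j; nlinarith
    have hRK' : χ * D' i j ≤ χ * (((r : ℝ) + 1) * K * C i j) := by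
      have := hD'bd i j; nlinarith
    have h1 := abs_le.mp hcl
    have h2 := abs_le.mp hcl'
    have hcore : σ * P' i j * D' i j ≤ σ * P i j * D i j + σ * ((αt i : ℝ) - (βt j : ℝ))
        + 2 * χ * (((r : ℝ) + 1) * K * C i j) := by
      rcases hσ with h | h <;> subst h <;>
        · simp only [one_mul, neg_one_mul, neg_mul]
          linarith [h1.1, h1.2, h2.1, h2.2]
    have hnum : η * (σ * P' i j) * D' i j ≤ η * (σ * P i j) * D i j
        + η * (σ * ((αt i : ℝ) - (βt j : ℝ))) + η * (2 * χ * (((r : ℝ) + 1) * K * C i j)) := by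
      have := mul_le_mul_of_nonneg_left hcore hη.le
      linarith
    have hexp : η * (σ * P' i j) * D' i j / C i j
        ≤ η * (σ * P i j) * D i j / C i j + η * σ * x i j + T := by
      calc η * (σ * P' i j) * D' i j / C i j
          ≤ (η * (σ * P i j) * D i j + η * (σ * ((αt i : ℝ) - (βt j : ℝ)))
              + η * (2 * χ * (((r : ℝ) + 1) * K * C i j))) / C i j := by
            exact div_le_div_of_nonneg_right hnum hCij.le
        _ = η * (σ * P i j) * D i j / C i j + η * σ * x i j + T := by
            rw [hx_def, hT_def]; field_simp
    have hwt : wt η C D' P' i j σ ≤ wt η C D P i j σ * Real.exp (η * σ * x i j + T) := by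
      rw [wt, wt, ← Real.exp_add]
      exact Real.exp_le_exp.mpr (by linarith [hexp])
    have hyabs : |η * σ * x i j| ≤ 1 := by
      rw [abs_mul, abs_mul, abs_of_pos hη, hσabs, mul_one]
      have := hxK i j
      nlinarith
    have hq1 : Real.exp (η * σ * x i j) ≤ 1 + η * σ * x i j + q := by
      have hquad := exp_quadratic hyabs
      have hsq : (η * σ * x i j) ^ 2 ≤ η ^ 2 * K ^ 2 := by
        have h1 : |η * σ * x i j| ≤ η * K := by
          rw [abs_mul, abs_mul, abs_of_pos hη, hσabs, mul_one]
          exact mul_le_mul_of_nonneg_left (hxK i j) hη.le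
        nlinarith [abs_nonneg (η * σ * x i j), sq_abs (η * σ * x i j)]
      rw [hq_def]; nlinarith
    calc wt η C D' P' i j σ ≤ wt η C D P i j σ * Real.exp (η * σ * x i j + T) := hwt
      _ = wt η C D P i j σ * (Real.exp (η * σ * x i j) * Real.exp T) := by rw [Real.exp_add]
      _ ≤ wt η C D P i j σ * ((1 + η * σ * x i j + q) * Real.exp T) := by
          apply mul_le_mul_of_nonneg_left _ (Real.exp_pos _).le
          exact mul_le_mul_of_nonneg_right hq1 (Real.exp_pos _).le
  -- the weighted mean hypothesis
  set S : ℝ := ∑ i, ∑ j, (wt η C D P i j 1 * x i j - wt η C D P i j (-1) * x i j) with hS_def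
  have hS : S ≤ W * (vt - γ) := by
    have heq : (∑ i, ∑ j,
        (lamOf η C D P i j 1 * (1 * (((αt i : ℝ) - (βt j : ℝ)) / C i j)) +
         lamOf η C D P i j (-1) * ((-1) * (((αt i : ℝ) - (βt j : ℝ)) / C i j)))) = S / W := by
      rw [hS_def, Finset.sum_div]
      refine Finset.sum_congr rfl fun i _ => ?_
      rw [Finset.sum_div]
      refine Finset.sum_congr rfl fun j _ => ?_
      rw [lamOf, lamOf, ← hW_def]
      simp only [hx_def]
      rw [div_mul_eq_mul_div, div_mul_eq_mul_div, ← add_div]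
      congr 1
      ring
    rw [heq, div_le_iff₀ hWpos] at hlam
    linarith
  -- assemble
  have hmain : totW η C D' P' ≤ Real.exp T * ((1 + q) * W + η * S) := by
    have hb : totW η C D' P' ≤ ∑ i, ∑ j,
        (Real.exp T * ((1 + q) * (wt η C D P i j 1 + wt η C D P i j (-1))
          + η * (wt η C D P i j 1 * x i j - wt η C D P i j (-1) * x i j))) := by
      rw [totW]
      refine Finset.sum_le_sum fun i _ => Finset.sum_le_sum fun j _ => ?_
      have s1 := hstep i j 1 (Or.inl rfl)
      have s2 := hstep i j (-1) (Or.inr rfl)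
      have e : Real.exp T * ((1 + q) * (wt η C D P i j 1 + wt η C D P i j (-1))
          + η * (wt η C D P i j 1 * x i j - wt η C D P i j (-1) * x i j))
          = wt η C D P i j 1 * ((1 + η * 1 * x i j + q) * Real.exp T)
            + wt η C D P i j (-1) * ((1 + η * (-1) * x i j + q) * Real.exp T) := by ring
      rw [e]
      exact add_le_add s1 s2
    calc totW η C D' P' ≤ _ := hb
      _ = Real.exp T * ((1 + q) * W + η * S) := by
          rw [hW_def, totW, hS_def]
          simp only [← Finset.mul_sum, Finset.sum_add_distrib]
  have hfin : Real.exp T * ((1 + q) * W + η * S)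
      ≤ W * Real.exp (η * (2 * χ * ((r : ℝ) + 1) * K + vt - γ + 2 * η * K ^ 2)) := by
    have step1 : (1 + q) * W + η * S ≤ (1 + q) * W + η * (W * (vt - γ)) := by
      have := mul_le_mul_of_nonneg_left hS hη.le
      linarith
    have step2 : (1 + q) * W + η * (W * (vt - γ)) = W * (1 + (η * (vt - γ) + q)) := by ring
    have step3 : W * (1 + (η * (vt - γ) + q)) ≤ W * Real.exp (η * (vt - γ) + q) := by
      have := Real.add_one_le_exp (η * (vt - γ) + q)
      nlinarith
    calc Real.exp T * ((1 + q) * W + η * S)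
        ≤ Real.exp T * (W * Real.exp (η * (vt - γ) + q)) := by
          have h1 : (1 + q) * W + η * S ≤ W * Real.exp (η * (vt - γ) + q) := by
            calc (1 + q) * W + η * S ≤ (1 + q) * W + η * (W * (vt - γ)) := step1
              _ = W * (1 + (η * (vt - γ) + q)) := step2
              _ ≤ W * Real.exp (η * (vt - γ) + q) := step3
          exact mul_le_mul_of_nonneg_left h1 (Real.exp_pos T).le
      _ = W * Real.exp (η * (2 * χ * ((r : ℝ) + 1) * K + vt - γ + 2 * η * K ^ 2)) := by
          rw [mul_comm (Real.exp T), mul_assoc, ← Real.exp_add, hT_def, hq_def]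
          congr 2
          ring
  calc totW η C D' P' ≤ Real.exp T * ((1 + q) * W + η * S) := hmain
    _ ≤ W * Real.exp (η * (2 * χ * ((r : ℝ) + 1) * K + vt - γ + 2 * η * K ^ 2)) := hfin
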